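/- arXiv:2307.12848 — 2 statements merged into one kernel-verified Lean document; each statement's English description precedes it below -/
import Mathlib

section
/- Let d = (d₁,d₂,d₃) ∈ ℝ³ with d₁, d₃ ∈ (-π,0) and d₂ ∈ (0,π), and suppose y⁰ = x⁰ + i·d (with x⁰ ∈ ℝ³) satisfies ∇S(y⁰) = 0. Then Re S restricted to the affine slice {x + i·d : x ∈ ℝ³} attains a strict global maximum at y⁰: for every x ∈ ℝ³ with x ≠ x⁰, Re S(x + i·d) < Re S(y⁰). -/
open Real intervalIntegral MeasureTheory Metric

/-- The dilogarithm `Li₂(z) = -∫₀¹ Log(1 - z t)/t dt`. -/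
noncomputable def Li2 (z : ℂ) : ℂ :=
  -∫ t in (0:ℝ)..1, Complex.log (1 - z * (t : ℂ)) / (t : ℂ)

lemma im_ne_of_ball {z w : ℂ} (hz : z.im ≠ 0) (hw : w ∈ closedBall z (|z.im|/2)) :
    |z.im| / 2 ≤ |w.im| := by
  have h1 : |w.im - z.im| ≤ |z.im| / 2 := by
    have := Complex.abs_im_le_norm (w - z)
    simp only [Complex.sub_im] at this
    calc |w.im - z.im| ≤ ‖w - z‖ := this
    _ ≤ |z.im|/2 := by rwa [mem_closedBall, Complex.dist_eq] at hw
  have := abs_sub_abs_le_abs_sub w.im z.im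
  have h2 : |z.im| - |w.im| ≤ |z.im|/2 := by
    have := abs_sub_abs_le_abs_sub z.im w.im
    rw [abs_sub_comm] at h1; linarith
  linarith

lemma one_sub_mul_ne {z w : ℂ} (hz : z.im ≠ 0) (hw : w ∈ closedBall z (|z.im|/2))
    {t : ℝ} (ht : t ∈ Set.Icc (0:ℝ) 1) : 1 - w * t ≠ 0 := by
  intro h
  have him : (1 - w * t).im = -(w.im * t) := by simp
  have hre : (1 - w * t).re = 1 - w.re * t := by simp
  rw [h] at him hre
  simp at him hre
  have hwim : w.im ≠ 0 := by
    have := im_ne_of_ball hz hw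
    have : 0 < |w.im| := lt_of_lt_of_le (by positivity) this
    exact abs_pos.mp this
  rcases him with h | h
  · exact hwim h
  · rw [h] at hre; simp at hre

lemma key_lower {z : ℂ} (hz : z.im ≠ 0) :
    ∃ c > 0, ∀ w ∈ closedBall z (|z.im|/2), ∀ t ∈ Set.Icc (0:ℝ) 1,
      c ≤ ‖1 - w * t‖ := by
  have hK : IsCompact ((closedBall z (|z.im|/2)) ×ˢ Set.Icc (0:ℝ) 1) :=
    (isCompact_closedBall _ _).prod isCompact_Icc
  have hne : ((closedBall z (|z.im|/2)) ×ˢ Set.Icc (0:ℝ) 1).Nonempty :=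
    ⟨⟨z, 0⟩, by simp [le_of_lt (by positivity : (0:ℝ) < |z.im|/2)]⟩
  have hcont : ContinuousOn (fun p : ℂ × ℝ => ‖1 - p.1 * (p.2 : ℂ)‖)
      ((closedBall z (|z.im|/2)) ×ˢ Set.Icc (0:ℝ) 1) := by
    fun_prop
  obtain ⟨p, hp, hmin⟩ := hK.exists_isMinOn hne hcont
  refine ⟨‖1 - p.1 * (p.2 : ℂ)‖, ?_, ?_⟩
  · exact norm_pos_iff.mpr (one_sub_mul_ne hz (Set.mem_prod.mp hp).1 (Set.mem_prod.mp hp).2)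
  · intro w hw t ht
    exact isMinOn_iff.mp hmin ⟨w, t⟩ (Set.mem_prod.mpr ⟨hw, ht⟩)

lemma slit_of (w : ℂ) {t : ℝ} (hw : w.im ≠ 0) (ht : t ∈ Set.Ioc (0:ℝ) 1) :
    1 - w * t ∈ Complex.slitPlane := by
  rw [Complex.mem_slitPlane_iff]
  right
  have h : (1 - w * (t:ℂ)).im = -(w.im * t) := by simp
  rw [h]
  exact neg_ne_zero.mpr (mul_ne_zero hw (ne_of_gt ht.1))

lemma im_ne_of_ball' {z w : ℂ} (hz : z.im ≠ 0) (hw : w ∈ closedBall z (|z.im|/2)) :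
    w.im ≠ 0 := by
  have := im_ne_of_ball hz hw
  have : 0 < |w.im| := lt_of_lt_of_le (by positivity) this
  exact abs_pos.mp this

lemma contOn_F {w : ℂ} (hw : w.im ≠ 0) :
    ContinuousOn (fun t : ℝ => -(Complex.log (1 - w * (t:ℂ)) / (t:ℂ))) (Set.Ioc 0 1) := by
  intro t ht
  apply ContinuousWithinAt.neg
  apply ContinuousWithinAt.div
  · have hc1 : ContinuousAt (fun x : ℝ => 1 - w * (x:ℂ)) t :=
      (continuous_const.sub (continuous_const.mul Complex.continuous_ofReal)).continuousAt
    exact (hc1.clog (slit_of w hw ht)).continuousWithinAt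
  · exact Complex.continuous_ofReal.continuousWithinAt
  · exact_mod_cast ne_of_gt ht.1

lemma hasDerivAt_Li2 {z : ℂ} (hz : z.im ≠ 0) :
    HasDerivAt Li2 (-Complex.log (1 - z) / z) z := by
  obtain ⟨c, hc, hcle⟩ := key_lower hz
  set ε := |z.im| / 2 with hε
  have hεpos : 0 < ε := by positivity
  have hz0 : z ≠ 0 := fun h => hz (by simp [h])
  -- the derivative under the integral
  have main : HasDerivAt (fun x : ℂ => ∫ t in (0:ℝ)..1, -(Complex.log (1 - x * (t:ℂ)) / (t:ℂ)))
      (∫ t in (0:ℝ)..1, (1 - z * (t:ℂ))⁻¹) z := by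
    have huIoc : Set.uIoc (0:ℝ) 1 = Set.Ioc 0 1 := Set.uIoc_of_le zero_le_one
    apply (intervalIntegral.hasDerivAt_integral_of_dominated_loc_of_deriv_le
      (F := fun x t => -(Complex.log (1 - x * (t:ℂ)) / (t:ℂ)))
      (F' := fun x t => (1 - x * (t:ℂ))⁻¹) (bound := fun _ => c⁻¹) (Metric.ball_mem_nhds z hεpos) ?_ ?_ ?_ ?_ ?_ ?_).2
    · -- measurability of F x near z
      filter_upwards [Metric.closedBall_mem_nhds z hεpos] with x hx
      rw [huIoc]
      exact (contOn_F (im_ne_of_ball' hz hx)).aestronglyMeasurable measurableSet_Ioc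
    · -- integrability of F z
      rw [intervalIntegrable_iff, huIoc]
      set δ : ℝ := (2 * (‖z‖ + 1))⁻¹ with hδ
      have hδpos : 0 < δ := by positivity
      set M : ℝ := max ((3/2) * ‖z‖) ((|Real.log c| + |Real.log (1 + ‖z‖)| + π) / δ) with hM
      apply MeasureTheory.Integrable.mono'
        (g := fun _ : ℝ => M) (integrable_const M)
        ((contOn_F hz).aestronglyMeasurable measurableSet_Ioc)
      filter_upwards [MeasureTheory.ae_restrict_mem measurableSet_Ioc] with t ht
      have ht0 : (0:ℝ) < t := ht.1
      have hzmem : z ∈ closedBall z ε := Metric.mem_closedBall_self hεpos.le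
      rcases le_or_gt t δ with hle | hgt
      · -- small t
        have hsmall : ‖-(z * (t:ℂ))‖ ≤ 1/2 := by
          rw [norm_neg, norm_mul, Complex.norm_real, Real.norm_eq_abs, abs_of_pos ht0]
          calc ‖z‖ * t ≤ ‖z‖ * δ := by
                exact mul_le_mul_of_nonneg_left hle (norm_nonneg z)
          _ ≤ 1/2 := by
                rw [hδ]
                rw [mul_inv_le_iff₀ (by positivity)]
                nlinarith [norm_nonneg z]
        have hlog : ‖Complex.log (1 - z * (t:ℂ))‖ ≤ (3/2) * ‖-(z * (t:ℂ))‖ := by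
          have := Complex.norm_log_one_add_half_le_self hsmall
          rwa [show (1:ℂ) + -(z * (t:ℂ)) = 1 - z * t by ring] at this
        have : ‖-(Complex.log (1 - z * (t:ℂ)) / (t:ℂ))‖ ≤ (3/2) * ‖z‖ := by
          rw [norm_neg, norm_div, Complex.norm_real, Real.norm_eq_abs, abs_of_pos ht0,
            div_le_iff₀ ht0]
          calc ‖Complex.log (1 - z * (t:ℂ))‖ ≤ (3/2) * ‖-(z * (t:ℂ))‖ := hlog
          _ = (3/2) * ‖z‖ * t := by
              rw [norm_neg, norm_mul, Complex.norm_real, Real.norm_eq_abs, abs_of_pos ht0]; ring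
        exact this.trans (le_max_left _ _)
      · -- large t
        have hnorm : c ≤ ‖1 - z * (t:ℂ)‖ := hcle z hzmem t ⟨ht0.le, ht.2⟩
        have hub : ‖1 - z * (t:ℂ)‖ ≤ 1 + ‖z‖ := by
          calc ‖1 - z * (t:ℂ)‖ ≤ ‖(1:ℂ)‖ + ‖z * (t:ℂ)‖ := norm_sub_le _ _
          _ ≤ 1 + ‖z‖ := by
              rw [norm_one, norm_mul, Complex.norm_real, Real.norm_eq_abs, abs_of_pos ht0]
              nlinarith [norm_nonneg z, ht.2]
        have hlogb : ‖Complex.log (1 - z * (t:ℂ))‖ ≤ |Real.log c| + |Real.log (1 + ‖z‖)| + π := by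
          calc ‖Complex.log (1 - z * (t:ℂ))‖
              ≤ |(Complex.log (1 - z * (t:ℂ))).re| + |(Complex.log (1 - z * (t:ℂ))).im| :=
                Complex.norm_le_abs_re_add_abs_im _
          _ ≤ |Real.log c| + |Real.log (1 + ‖z‖)| + π := by
              have hre : (Complex.log (1 - z * (t:ℂ))).re = Real.log ‖1 - z * (t:ℂ)‖ :=
                Complex.log_re _
              have him : |(Complex.log (1 - z * (t:ℂ))).im| ≤ π := by
                rw [Complex.log_im]; exact Complex.abs_arg_le_pi _
              have h1 : Real.log c ≤ Real.log ‖1 - z * (t:ℂ)‖ :=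
                Real.log_le_log hc (by assumption)
              have h2 : Real.log ‖1 - z * (t:ℂ)‖ ≤ Real.log (1 + ‖z‖) :=
                Real.log_le_log (lt_of_lt_of_le hc (by assumption)) (by
                  assumption)
              rw [hre]
              have : |Real.log ‖1 - z * (t:ℂ)‖| ≤ |Real.log c| + |Real.log (1 + ‖z‖)| := by
                rw [abs_le]
                constructor
                · have := neg_abs_le (Real.log c)
                  nlinarith [abs_nonneg (Real.log (1 + ‖z‖))]
                · have := le_abs_self (Real.log (1 + ‖z‖))
                  nlinarith [abs_nonneg (Real.log c)]
              linarith
        have : ‖-(Complex.log (1 - z * (t:ℂ)) / (t:ℂ))‖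
            ≤ (|Real.log c| + |Real.log (1 + ‖z‖)| + π) / δ := by
          rw [norm_neg, norm_div, Complex.norm_real, Real.norm_eq_abs, abs_of_pos ht0,
            div_le_div_iff₀ ht0 hδpos]
          nlinarith [norm_nonneg (Complex.log (1 - z * (t:ℂ))), Real.pi_pos,
            abs_nonneg (Real.log c), abs_nonneg (Real.log (1 + ‖z‖))]
        exact this.trans (le_max_right _ _)
    · -- measurability of F' z
      rw [huIoc]
      apply ContinuousOn.aestronglyMeasurable _ measurableSet_Ioc
      intro t ht
      apply ContinuousWithinAt.inv₀
        ((continuous_const.sub (continuous_const.mul Complex.continuous_ofReal)).continuousWithinAt)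
      have : c ≤ ‖1 - z * (t:ℂ)‖ := hcle z (Metric.mem_closedBall_self hεpos.le) t ⟨ht.1.le, ht.2⟩
      intro h; simp only [Pi.sub_apply, Pi.mul_apply] at h; rw [h] at this; simp at this; linarith
    · -- bound on F'
      filter_upwards with t ht x hx
      rw [huIoc] at ht
      have : c ≤ ‖1 - x * (t:ℂ)‖ :=
        hcle x (Metric.ball_subset_closedBall hx) t ⟨ht.1.le, ht.2⟩
      rw [norm_inv]
      exact inv_anti₀ hc this
    · exact intervalIntegrable_const
    · -- differentiability of F in x
      filter_upwards with t ht x hx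
      rw [huIoc] at ht
      have hxim : x.im ≠ 0 := im_ne_of_ball' hz (Metric.ball_subset_closedBall hx)
      have h1 : HasDerivAt (fun x : ℂ => 1 - x * (t:ℂ)) (-(t:ℂ)) x := by
        simpa using ((hasDerivAt_id x).mul_const (t:ℂ)).const_sub 1
      have h2 := h1.clog (slit_of x hxim ht)
      have h3 := (h2.div_const (t:ℂ)).neg
      refine h3.congr_deriv ?_
      have htne : (t:ℂ) ≠ 0 := by exact_mod_cast ne_of_gt ht.1
      have hne : 1 - x * (t:ℂ) ≠ 0 := Complex.slitPlane_ne_zero (slit_of x hxim ht)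
      field_simp
  -- identify the function with Li2
  have hfun : (fun x : ℂ => ∫ t in (0:ℝ)..1, -(Complex.log (1 - x * (t:ℂ)) / (t:ℂ))) = Li2 := by
    funext x
    rw [Li2, intervalIntegral.integral_neg]
  rw [hfun] at main
  -- evaluate the integral
  have heval : (∫ t in (0:ℝ)..1, (1 - z * (t:ℂ))⁻¹) = -Complex.log (1 - z) / z := by
    have hne : ∀ t ∈ Set.uIcc (0:ℝ) 1, 1 - z * (t:ℂ) ≠ 0 := by
      intro t ht
      rw [Set.uIcc_of_le zero_le_one] at ht
      have : c ≤ ‖1 - z * (t:ℂ)‖ := hcle z (Metric.mem_closedBall_self hεpos.le) t ht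
      intro h; rw [h] at this; simp at this; linarith
    have hslit : ∀ t ∈ Set.uIcc (0:ℝ) 1, 1 - z * (t:ℂ) ∈ Complex.slitPlane := by
      intro t ht
      rw [Set.uIcc_of_le zero_le_one] at ht
      rcases eq_or_lt_of_le ht.1 with h | h
      · rw [Complex.mem_slitPlane_iff]; left; simp [← h]
      · exact slit_of z hz ⟨h, ht.2⟩
    have hg : ∀ t ∈ Set.uIcc (0:ℝ) 1,
        HasDerivAt (fun t : ℝ => -Complex.log (1 - z * (t:ℂ)) / z) ((1 - z * (t:ℂ))⁻¹) t := by
      intro t ht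
      have h1 : HasDerivAt (fun t : ℝ => 1 - z * (t:ℂ)) (-z) t := by
        have : HasDerivAt (fun w : ℂ => 1 - z * w) (-z) (t:ℂ) := by
          simpa using ((hasDerivAt_id (t:ℂ)).const_mul z).const_sub 1
        exact this.comp_ofReal
      have h2 := h1.clog_real (hslit t ht)
      have h3 := (h2.neg).div_const z
      refine h3.congr_deriv ?_
      field_simp [hne t ht]
    have hint : IntervalIntegrable (fun t : ℝ => (1 - z * (t:ℂ))⁻¹) MeasureTheory.volume 0 1 := by
      apply ContinuousOn.intervalIntegrable
      intro t ht
      exact ContinuousWithinAt.inv₀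
        ((continuous_const.sub (continuous_const.mul Complex.continuous_ofReal)).continuousWithinAt)
        (hne t ht)
    rw [intervalIntegral.integral_eq_sub_of_hasDerivAt hg hint]
    simp
  rwa [heval] at main

/-- The potential function `S`. -/
noncomputable def pot (y₁ y₂ y₃ : ℂ) : ℂ :=
  Complex.I * (y₁ ^ 2 - y₁ * y₂ + y₂ * y₃ + y₃ ^ 2 / 2) +
    (-(π : ℂ) * y₁ + (π : ℂ) * y₃) +
    Complex.I * Li2 (-Complex.exp y₁) - Complex.I * Li2 (-Complex.exp y₂) +
    3 * Complex.I * Li2 (-Complex.exp y₃)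

lemma im_neg_exp_ne {y : ℂ} (h : Real.sin y.im ≠ 0) : (-Complex.exp y).im ≠ 0 := by
  rw [Complex.neg_im, Complex.exp_im]
  simp only [ne_eq, neg_eq_zero, mul_eq_zero, not_or]
  exact ⟨Real.exp_ne_zero _, h⟩

lemma one_add_exp_ne {y : ℂ} (h : Real.sin y.im ≠ 0) : (1 : ℂ) + Complex.exp y ≠ 0 := by
  intro hc
  have : ((1 : ℂ) + Complex.exp y).im = Real.exp y.re * Real.sin y.im := by
    simp [Complex.exp_im]
  rw [hc] at this
  simp only [Complex.zero_im] at this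
  exact (mul_ne_zero (Real.exp_ne_zero _) h) this.symm

lemma one_add_exp_slit {y : ℂ} (h : Real.sin y.im ≠ 0) :
    (1 : ℂ) + Complex.exp y ∈ Complex.slitPlane := by
  rw [Complex.mem_slitPlane_iff]
  right
  have : ((1 : ℂ) + Complex.exp y).im = Real.exp y.re * Real.sin y.im := by
    simp [Complex.exp_im]
  rw [this]
  exact mul_ne_zero (Real.exp_ne_zero _) h

lemma hasDerivAt_Li2exp {y : ℂ} (h : Real.sin y.im ≠ 0) :
    HasDerivAt (fun w => Li2 (-Complex.exp w)) (-Complex.log (1 + Complex.exp y)) y := by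
  have h1 := hasDerivAt_Li2 (im_neg_exp_ne h)
  have h2 : HasDerivAt (fun w => -Complex.exp w) (-Complex.exp y) y :=
    (Complex.hasDerivAt_exp y).neg
  have h3 := h1.comp y h2
  refine h3.congr_deriv ?_
  have hE : Complex.exp y ≠ 0 := Complex.exp_ne_zero y
  rw [show (1 : ℂ) - -Complex.exp y = 1 + Complex.exp y by ring]
  field_simp

lemma hasDerivAt_logexp {y : ℂ} (h : Real.sin y.im ≠ 0) :
    HasDerivAt (fun w => Complex.log (1 + Complex.exp w))
      (Complex.exp y / (1 + Complex.exp y)) y := by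
  have h1 : HasDerivAt (fun w => (1 : ℂ) + Complex.exp w) (Complex.exp y) y :=
    (Complex.hasDerivAt_exp y).const_add 1
  exact h1.clog (one_add_exp_slit h)

lemma hasDerivAt_pot1 (y₁ y₂ y₃ : ℂ) (h : Real.sin y₁.im ≠ 0) :
    HasDerivAt (fun w => pot w y₂ y₃)
      (Complex.I * (2 * y₁ - y₂) - (π : ℂ) - Complex.I * Complex.log (1 + Complex.exp y₁)) y₁ := by
  have A : HasDerivAt (fun w : ℂ => Complex.I * (w ^ 2 - w * y₂ + y₂ * y₃ + y₃ ^ 2 / 2))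
      (Complex.I * (2 * y₁ - y₂)) y₁ := by
    have : HasDerivAt (fun w : ℂ => w ^ 2 - w * y₂ + y₂ * y₃ + y₃ ^ 2 / 2) (2 * y₁ - y₂) y₁ := by
      simpa using ((((hasDerivAt_pow 2 y₁).sub ((hasDerivAt_id y₁).mul_const y₂)).add_const
        (y₂ * y₃)).add_const (y₃ ^ 2 / 2))
    exact this.const_mul Complex.I
  have B : HasDerivAt (fun w : ℂ => -(π : ℂ) * w + (π : ℂ) * y₃) (-(π : ℂ)) y₁ := by
    simpa using ((hasDerivAt_id y₁).const_mul (-(π : ℂ))).add_const ((π : ℂ) * y₃)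
  have C : HasDerivAt (fun w : ℂ => Complex.I * Li2 (-Complex.exp w))
      (Complex.I * -Complex.log (1 + Complex.exp y₁)) y₁ := (hasDerivAt_Li2exp h).const_mul _
  have D := (((A.add B).add C).sub_const (Complex.I * Li2 (-Complex.exp y₂))).add_const
    (3 * Complex.I * Li2 (-Complex.exp y₃))
  refine D.congr_deriv ?_
  ring

lemma hasDerivAt_pot2 (y₁ y₂ y₃ : ℂ) (h : Real.sin y₂.im ≠ 0) :
    HasDerivAt (fun w => pot y₁ w y₃)
      (Complex.I * (y₃ - y₁) + Complex.I * Complex.log (1 + Complex.exp y₂)) y₂ := by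
  have A : HasDerivAt (fun w : ℂ => Complex.I * (y₁ ^ 2 - y₁ * w + w * y₃ + y₃ ^ 2 / 2))
      (Complex.I * (y₃ - y₁)) y₂ := by
    have : HasDerivAt (fun w : ℂ => y₁ ^ 2 - y₁ * w + w * y₃ + y₃ ^ 2 / 2) (y₃ - y₁) y₂ := by
      have h1 : HasDerivAt (fun w : ℂ => y₁ ^ 2 - y₁ * w) (-y₁) y₂ := by
        simpa using ((hasDerivAt_id y₂).const_mul y₁).const_sub (y₁ ^ 2)
      have h2 : HasDerivAt (fun w : ℂ => y₁ ^ 2 - y₁ * w + w * y₃) (-y₁ + 1 * y₃) y₂ :=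
        h1.add ((hasDerivAt_id y₂).mul_const y₃)
      have h3 := h2.add_const (y₃ ^ 2 / 2)
      refine h3.congr_deriv ?_
      ring
    exact this.const_mul Complex.I
  have C : HasDerivAt (fun w : ℂ => Complex.I * Li2 (-Complex.exp w))
      (Complex.I * -Complex.log (1 + Complex.exp y₂)) y₂ := (hasDerivAt_Li2exp h).const_mul _
  have D := ((((A.add_const (-(π : ℂ) * y₁ + (π : ℂ) * y₃)).add_const
      (Complex.I * Li2 (-Complex.exp y₁))).sub C).add_const
      (3 * Complex.I * Li2 (-Complex.exp y₃)))
  have hfun : (fun w : ℂ => Complex.I * (y₁ ^ 2 - y₁ * w + w * y₃ + y₃ ^ 2 / 2)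
      + (-(π : ℂ) * y₁ + (π : ℂ) * y₃) + Complex.I * Li2 (-Complex.exp y₁)
      - Complex.I * Li2 (-Complex.exp w) + 3 * Complex.I * Li2 (-Complex.exp y₃))
      = fun w => pot y₁ w y₃ := by
    funext w; rw [pot]
  rw [← hfun]
  refine D.congr_deriv ?_
  ring

lemma hasDerivAt_pot3 (y₁ y₂ y₃ : ℂ) (h : Real.sin y₃.im ≠ 0) :
    HasDerivAt (fun w => pot y₁ y₂ w)
      (Complex.I * (y₂ + y₃) + (π : ℂ) - 3 * Complex.I * Complex.log (1 + Complex.exp y₃)) y₃ := by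
  have A : HasDerivAt (fun w : ℂ => Complex.I * (y₁ ^ 2 - y₁ * y₂ + y₂ * w + w ^ 2 / 2))
      (Complex.I * (y₂ + y₃)) y₃ := by
    have : HasDerivAt (fun w : ℂ => y₁ ^ 2 - y₁ * y₂ + y₂ * w + w ^ 2 / 2) (y₂ + y₃) y₃ := by
      have h1 : HasDerivAt (fun w : ℂ => y₁ ^ 2 - y₁ * y₂ + y₂ * w) y₂ y₃ := by
        simpa using ((hasDerivAt_id y₃).const_mul y₂).const_add (y₁ ^ 2 - y₁ * y₂)
      have h2 : HasDerivAt (fun w : ℂ => w ^ 2 / 2) y₃ y₃ := by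
        simpa using (hasDerivAt_pow 2 y₃).div_const 2
      exact h1.add h2
    exact this.const_mul Complex.I
  have B : HasDerivAt (fun w : ℂ => -(π : ℂ) * y₁ + (π : ℂ) * w) ((π : ℂ)) y₃ := by
    simpa using ((hasDerivAt_id y₃).const_mul ((π : ℂ))).const_add (-(π : ℂ) * y₁)
  have C : HasDerivAt (fun w : ℂ => 3 * Complex.I * Li2 (-Complex.exp w))
      (3 * Complex.I * -Complex.log (1 + Complex.exp y₃)) y₃ := (hasDerivAt_Li2exp h).const_mul _
  have D := ((((A.add B).add_const (Complex.I * Li2 (-Complex.exp y₁))).sub_const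
      (Complex.I * Li2 (-Complex.exp y₂))).add C)
  have hfun : (fun w : ℂ => Complex.I * (y₁ ^ 2 - y₁ * y₂ + y₂ * w + w ^ 2 / 2)
      + (-(π : ℂ) * y₁ + (π : ℂ) * w) + Complex.I * Li2 (-Complex.exp y₁)
      - Complex.I * Li2 (-Complex.exp y₂) + 3 * Complex.I * Li2 (-Complex.exp w))
      = fun w => pot y₁ y₂ w := by
    funext w; rw [pot]
  rw [← hfun]
  refine D.congr_deriv ?_
  ring

lemma real_slice {e : ℂ → ℂ} {p : ℂ} (d t : ℝ)
    (h : HasDerivAt e p ((t : ℂ) + (d : ℂ) * Complex.I)) :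
    HasDerivAt (fun s : ℝ => (e ((s : ℂ) + (d : ℂ) * Complex.I)).re) p.re t := by
  have hs : HasDerivAt (fun w : ℂ => w + (d : ℂ) * Complex.I) 1 (t : ℂ) :=
    (hasDerivAt_id _).add_const _
  have h1 : HasDerivAt (fun w : ℂ => e (w + (d : ℂ) * Complex.I)) p (t : ℂ) := by
    have := h.comp (t : ℂ) hs; rw [mul_one] at this; exact this
  exact h1.real_of_complex

lemma hasDerivAt_P1 (y₂ : ℂ) {w : ℂ} (h : Real.sin w.im ≠ 0) :
    HasDerivAt (fun w => Complex.I * (2 * w - y₂) - (π : ℂ)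
        - Complex.I * Complex.log (1 + Complex.exp w))
      (2 * Complex.I - Complex.I * (Complex.exp w / (1 + Complex.exp w))) w := by
  have A : HasDerivAt (fun w : ℂ => Complex.I * (2 * w - y₂)) (Complex.I * 2) w := by
    have : HasDerivAt (fun w : ℂ => 2 * w - y₂) 2 w := by
      simpa using ((hasDerivAt_id w).const_mul (2:ℂ)).sub_const y₂
    exact this.const_mul Complex.I
  have C : HasDerivAt (fun w : ℂ => Complex.I * Complex.log (1 + Complex.exp w))
      (Complex.I * (Complex.exp w / (1 + Complex.exp w))) w :=
    (hasDerivAt_logexp h).const_mul Complex.I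
  have D := (A.sub_const (π : ℂ)).sub C
  refine D.congr_deriv ?_
  ring

lemma hasDerivAt_P2 (y₁ y₃ : ℂ) {w : ℂ} (h : Real.sin w.im ≠ 0) :
    HasDerivAt (fun w => Complex.I * (y₃ - y₁)
        + Complex.I * Complex.log (1 + Complex.exp w))
      (Complex.I * (Complex.exp w / (1 + Complex.exp w))) w := by
  have C : HasDerivAt (fun w : ℂ => Complex.I * Complex.log (1 + Complex.exp w))
      (Complex.I * (Complex.exp w / (1 + Complex.exp w))) w :=
    (hasDerivAt_logexp h).const_mul Complex.I
  simpa using C.const_add (Complex.I * (y₃ - y₁))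

lemma hasDerivAt_P3 (y₂ : ℂ) {w : ℂ} (h : Real.sin w.im ≠ 0) :
    HasDerivAt (fun w => Complex.I * (y₂ + w) + (π : ℂ)
        - 3 * Complex.I * Complex.log (1 + Complex.exp w))
      (Complex.I - 3 * Complex.I * (Complex.exp w / (1 + Complex.exp w))) w := by
  have A : HasDerivAt (fun w : ℂ => Complex.I * (y₂ + w)) (Complex.I * 1) w :=
    (((hasDerivAt_id w).const_add y₂).const_mul Complex.I)
  have C : HasDerivAt (fun w : ℂ => 3 * Complex.I * Complex.log (1 + Complex.exp w))
      (3 * Complex.I * (Complex.exp w / (1 + Complex.exp w))) w :=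
    (hasDerivAt_logexp h).const_mul _
  have D := (A.add_const (π : ℂ)).sub C
  refine D.congr_deriv ?_
  ring

lemma im_quot {w : ℂ} (h : Real.sin w.im ≠ 0) :
    (Complex.exp w / (1 + Complex.exp w)).im
      = Real.exp w.re * Real.sin w.im / Complex.normSq (1 + Complex.exp w) := by
  have hne := one_add_exp_ne h
  have hN : Complex.normSq (1 + Complex.exp w) ≠ 0 := by simpa using Complex.normSq_pos.mpr hne |>.ne'
  rw [Complex.div_im]
  have h1 : ((1 : ℂ) + Complex.exp w).re = 1 + (Complex.exp w).re := by simp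
  have h2 : ((1 : ℂ) + Complex.exp w).im = (Complex.exp w).im := by simp
  rw [h1, h2]
  rw [show (Complex.exp w).im = Real.exp w.re * Real.sin w.im from Complex.exp_im w]
  field_simp
  ring

lemma normSq_one_add_exp_pos {w : ℂ} (h : Real.sin w.im ≠ 0) :
    0 < Complex.normSq (1 + Complex.exp w) :=
  Complex.normSq_pos.mpr (one_add_exp_ne h)

lemma re_P1' {w : ℂ} (h : Real.sin w.im < 0) :
    (2 * Complex.I - Complex.I * (Complex.exp w / (1 + Complex.exp w))).re < 0 := by
  have hne : Real.sin w.im ≠ 0 := ne_of_lt h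
  have key : (2 * Complex.I - Complex.I * (Complex.exp w / (1 + Complex.exp w))).re
      = (Complex.exp w / (1 + Complex.exp w)).im := by
    simp [Complex.sub_re, Complex.mul_re, Complex.I_re, Complex.I_im]
  rw [key, im_quot hne]
  apply div_neg_of_neg_of_pos _ (normSq_one_add_exp_pos hne)
  exact mul_neg_of_pos_of_neg (Real.exp_pos _) h

lemma re_P2' {w : ℂ} (h : 0 < Real.sin w.im) :
    (Complex.I * (Complex.exp w / (1 + Complex.exp w))).re < 0 := by
  have hne : Real.sin w.im ≠ 0 := ne_of_gt h
  have key : (Complex.I * (Complex.exp w / (1 + Complex.exp w))).re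
      = -(Complex.exp w / (1 + Complex.exp w)).im := by
    simp [Complex.mul_re, Complex.I_re, Complex.I_im]
  rw [key, neg_neg_iff_pos, im_quot hne]
  apply div_pos _ (normSq_one_add_exp_pos hne)
  exact mul_pos (Real.exp_pos _) h

lemma re_P3' {w : ℂ} (h : Real.sin w.im < 0) :
    (Complex.I - 3 * Complex.I * (Complex.exp w / (1 + Complex.exp w))).re < 0 := by
  have hne : Real.sin w.im ≠ 0 := ne_of_lt h
  have key : (Complex.I - 3 * Complex.I * (Complex.exp w / (1 + Complex.exp w))).re
      = 3 * (Complex.exp w / (1 + Complex.exp w)).im := by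
    simp [Complex.sub_re, Complex.mul_re, Complex.mul_im, Complex.I_re, Complex.I_im]
  rw [key, im_quot hne]
  have := div_neg_of_neg_of_pos
    (mul_neg_of_pos_of_neg (Real.exp_pos w.re) h) (normSq_one_add_exp_pos hne)
  linarith

lemma strict_max_1d {h φ : ℝ → ℝ} (hd : ∀ t, HasDerivAt h (φ t) t) (hanti : StrictAnti φ)
    {t₀ : ℝ} (h0 : φ t₀ = 0) : ∀ t, t ≠ t₀ → h t < h t₀ := by
  intro t ht
  have hcont : ∀ a b : ℝ, ContinuousOn h (Set.Icc a b) := by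
    intro a b
    exact fun s _ => (hd s).continuousAt.continuousWithinAt
  rcases lt_or_gt_of_ne ht with hlt | hgt
  · obtain ⟨c, hc, hceq⟩ := exists_hasDerivAt_eq_slope h φ hlt (hcont t t₀)
      (fun s _ => hd s)
    have hc0 : 0 < φ c := by
      rw [← h0]
      exact hanti hc.2
    rw [hceq] at hc0
    have := mul_pos hc0 (sub_pos.mpr hlt)
    rw [div_mul_cancel₀] at this
    · linarith
    · exact ne_of_gt (sub_pos.mpr hlt)
  · obtain ⟨c, hc, hceq⟩ := exists_hasDerivAt_eq_slope h φ hgt (hcont t₀ t)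
      (fun s _ => hd s)
    have hc0 : φ c < 0 := by
      rw [← h0]
      exact hanti hc.1
    rw [hceq] at hc0
    have := mul_neg_of_neg_of_pos hc0 (sub_pos.mpr hgt)
    rw [div_mul_cancel₀] at this
    · linarith
    · exact ne_of_gt (sub_pos.mpr hgt)

lemma sep (d₁ d₂ d₃ : ℝ) (a₁ a₂ a₃ b₁ b₂ b₃ : ℝ) :
    (pot ((a₁ : ℂ) + (d₁ : ℂ) * Complex.I) ((a₂ : ℂ) + (d₂ : ℂ) * Complex.I)
        ((a₃ : ℂ) + (d₃ : ℂ) * Complex.I)).re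
      + 2 * (pot ((b₁ : ℂ) + (d₁ : ℂ) * Complex.I) ((b₂ : ℂ) + (d₂ : ℂ) * Complex.I)
        ((b₃ : ℂ) + (d₃ : ℂ) * Complex.I)).re
    = (pot ((a₁ : ℂ) + (d₁ : ℂ) * Complex.I) ((b₂ : ℂ) + (d₂ : ℂ) * Complex.I)
        ((b₃ : ℂ) + (d₃ : ℂ) * Complex.I)).re
      + (pot ((b₁ : ℂ) + (d₁ : ℂ) * Complex.I) ((a₂ : ℂ) + (d₂ : ℂ) * Complex.I)
        ((b₃ : ℂ) + (d₃ : ℂ) * Complex.I)).re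
      + (pot ((b₁ : ℂ) + (d₁ : ℂ) * Complex.I) ((b₂ : ℂ) + (d₂ : ℂ) * Complex.I)
        ((a₃ : ℂ) + (d₃ : ℂ) * Complex.I)).re := by
  simp only [pot, Complex.add_re, Complex.add_im, Complex.sub_re, Complex.sub_im,
    Complex.mul_re, Complex.mul_im, Complex.I_re, Complex.I_im, Complex.ofReal_re,
    Complex.ofReal_im, Complex.one_re, Complex.one_im, pow_two, Complex.div_re,
    Complex.div_im, Complex.normSq_apply, Complex.neg_re, Complex.neg_im,
    Complex.re_ofNat, Complex.im_ofNat]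
  ring

/-- if `∇S` vanishes at `y⁰ = x⁰ + i d` on an admissible slice,
then `Re S` restricted to that slice has a strict global maximum at `y⁰`. -/
theorem reS_strict_global_max (d₁ d₂ d₃ : ℝ)
    (hd₁ : d₁ ∈ Set.Ioo (-π) 0) (hd₂ : d₂ ∈ Set.Ioo 0 π)
    (hd₃ : d₃ ∈ Set.Ioo (-π) 0) (x₀ : Fin 3 → ℝ)
    (hcrit :
      deriv (fun w => pot w ((x₀ 1 : ℂ) + (d₂ : ℂ) * Complex.I)
          ((x₀ 2 : ℂ) + (d₃ : ℂ) * Complex.I))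
        ((x₀ 0 : ℂ) + (d₁ : ℂ) * Complex.I) = 0 ∧
      deriv (fun w => pot ((x₀ 0 : ℂ) + (d₁ : ℂ) * Complex.I) w
          ((x₀ 2 : ℂ) + (d₃ : ℂ) * Complex.I))
        ((x₀ 1 : ℂ) + (d₂ : ℂ) * Complex.I) = 0 ∧
      deriv (fun w => pot ((x₀ 0 : ℂ) + (d₁ : ℂ) * Complex.I)
          ((x₀ 1 : ℂ) + (d₂ : ℂ) * Complex.I) w)
        ((x₀ 2 : ℂ) + (d₃ : ℂ) * Complex.I) = 0) :
    ∀ x : Fin 3 → ℝ, x ≠ x₀ →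
      (pot ((x 0 : ℂ) + (d₁ : ℂ) * Complex.I)
           ((x 1 : ℂ) + (d₂ : ℂ) * Complex.I)
           ((x 2 : ℂ) + (d₃ : ℂ) * Complex.I)).re <
      (pot ((x₀ 0 : ℂ) + (d₁ : ℂ) * Complex.I)
           ((x₀ 1 : ℂ) + (d₂ : ℂ) * Complex.I)
           ((x₀ 2 : ℂ) + (d₃ : ℂ) * Complex.I)).re := by
  intro x hx
  have hs1 : Real.sin d₁ < 0 := Real.sin_neg_of_neg_of_neg_pi_lt hd₁.2 hd₁.1
  have hs2 : 0 < Real.sin d₂ := Real.sin_pos_of_pos_of_lt_pi hd₂.1 hd₂.2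
  have hs3 : Real.sin d₃ < 0 := Real.sin_neg_of_neg_of_neg_pi_lt hd₃.2 hd₃.1
  have him1 : ∀ t : ℝ, Real.sin (((t : ℂ) + (d₁ : ℂ) * Complex.I).im) < 0 := by
    intro t; simpa using hs1
  have him2 : ∀ t : ℝ, 0 < Real.sin (((t : ℂ) + (d₂ : ℂ) * Complex.I).im) := by
    intro t; simpa using hs2
  have him3 : ∀ t : ℝ, Real.sin (((t : ℂ) + (d₃ : ℂ) * Complex.I).im) < 0 := by
    intro t; simpa using hs3
  -- coordinate 1
  have hh₁ : ∀ t : ℝ, HasDerivAt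
      (fun s : ℝ => (pot ((s : ℂ) + (d₁ : ℂ) * Complex.I) ((x₀ 1 : ℂ) + (d₂ : ℂ) * Complex.I)
        ((x₀ 2 : ℂ) + (d₃ : ℂ) * Complex.I)).re)
      ((Complex.I * (2 * ((t : ℂ) + (d₁ : ℂ) * Complex.I) - ((x₀ 1 : ℂ) + (d₂ : ℂ) * Complex.I))
        - (π : ℂ)
        - Complex.I * Complex.log (1 + Complex.exp ((t : ℂ) + (d₁ : ℂ) * Complex.I))).re) t := by
    intro t
    exact real_slice d₁ t (hasDerivAt_pot1 _ _ _ (ne_of_lt (him1 t)))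
  have hφ₁ : ∀ t : ℝ, HasDerivAt
      (fun s : ℝ => ((Complex.I * (2 * ((s : ℂ) + (d₁ : ℂ) * Complex.I)
          - ((x₀ 1 : ℂ) + (d₂ : ℂ) * Complex.I)) - (π : ℂ)
        - Complex.I * Complex.log (1 + Complex.exp ((s : ℂ) + (d₁ : ℂ) * Complex.I))).re))
      ((2 * Complex.I - Complex.I * (Complex.exp ((t : ℂ) + (d₁ : ℂ) * Complex.I)
        / (1 + Complex.exp ((t : ℂ) + (d₁ : ℂ) * Complex.I)))).re) t := by
    intro t
    exact real_slice d₁ t (hasDerivAt_P1 _ (ne_of_lt (him1 t)))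
  have hanti₁ : StrictAnti (fun s : ℝ => ((Complex.I * (2 * ((s : ℂ) + (d₁ : ℂ) * Complex.I)
      - ((x₀ 1 : ℂ) + (d₂ : ℂ) * Complex.I)) - (π : ℂ)
      - Complex.I * Complex.log (1 + Complex.exp ((s : ℂ) + (d₁ : ℂ) * Complex.I))).re)) := by
    apply strictAnti_of_deriv_neg
    intro t
    rw [(hφ₁ t).deriv]
    exact re_P1' (him1 t)
  have hcrit₁ : ((Complex.I * (2 * ((x₀ 0 : ℂ) + (d₁ : ℂ) * Complex.I)
      - ((x₀ 1 : ℂ) + (d₂ : ℂ) * Complex.I)) - (π : ℂ)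
      - Complex.I * Complex.log (1 + Complex.exp ((x₀ 0 : ℂ) + (d₁ : ℂ) * Complex.I))).re) = 0 := by
    have hD := hasDerivAt_pot1 ((x₀ 0 : ℂ) + (d₁ : ℂ) * Complex.I)
      ((x₀ 1 : ℂ) + (d₂ : ℂ) * Complex.I) ((x₀ 2 : ℂ) + (d₃ : ℂ) * Complex.I)
      (ne_of_lt (him1 (x₀ 0)))
    have := hD.deriv
    rw [hcrit.1] at this
    rw [← this]
    simp
  have hmax₁ := strict_max_1d hh₁ hanti₁ hcrit₁
  have hle₁ : ∀ t : ℝ, (pot ((t : ℂ) + (d₁ : ℂ) * Complex.I) ((x₀ 1 : ℂ) + (d₂ : ℂ) * Complex.I)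
      ((x₀ 2 : ℂ) + (d₃ : ℂ) * Complex.I)).re
      ≤ (pot ((x₀ 0 : ℂ) + (d₁ : ℂ) * Complex.I) ((x₀ 1 : ℂ) + (d₂ : ℂ) * Complex.I)
      ((x₀ 2 : ℂ) + (d₃ : ℂ) * Complex.I)).re := by
    intro t
    rcases eq_or_ne t (x₀ 0) with h | h
    · rw [h]
    · exact le_of_lt (hmax₁ t h)
  -- coordinate 2
  have hh₂ : ∀ t : ℝ, HasDerivAt
      (fun s : ℝ => (pot ((x₀ 0 : ℂ) + (d₁ : ℂ) * Complex.I) ((s : ℂ) + (d₂ : ℂ) * Complex.I)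
        ((x₀ 2 : ℂ) + (d₃ : ℂ) * Complex.I)).re)
      ((Complex.I * (((x₀ 2 : ℂ) + (d₃ : ℂ) * Complex.I) - ((x₀ 0 : ℂ) + (d₁ : ℂ) * Complex.I))
        + Complex.I * Complex.log (1 + Complex.exp ((t : ℂ) + (d₂ : ℂ) * Complex.I))).re) t := by
    intro t
    exact real_slice d₂ t (hasDerivAt_pot2 _ _ _ (ne_of_gt (him2 t)))
  have hφ₂ : ∀ t : ℝ, HasDerivAt
      (fun s : ℝ => ((Complex.I * (((x₀ 2 : ℂ) + (d₃ : ℂ) * Complex.I)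
          - ((x₀ 0 : ℂ) + (d₁ : ℂ) * Complex.I))
        + Complex.I * Complex.log (1 + Complex.exp ((s : ℂ) + (d₂ : ℂ) * Complex.I))).re))
      ((Complex.I * (Complex.exp ((t : ℂ) + (d₂ : ℂ) * Complex.I)
        / (1 + Complex.exp ((t : ℂ) + (d₂ : ℂ) * Complex.I)))).re) t := by
    intro t
    exact real_slice d₂ t (hasDerivAt_P2 _ _ (ne_of_gt (him2 t)))
  have hanti₂ : StrictAnti (fun s : ℝ => ((Complex.I * (((x₀ 2 : ℂ) + (d₃ : ℂ) * Complex.I)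
      - ((x₀ 0 : ℂ) + (d₁ : ℂ) * Complex.I))
      + Complex.I * Complex.log (1 + Complex.exp ((s : ℂ) + (d₂ : ℂ) * Complex.I))).re)) := by
    apply strictAnti_of_deriv_neg
    intro t
    rw [(hφ₂ t).deriv]
    exact re_P2' (him2 t)
  have hcrit₂ : ((Complex.I * (((x₀ 2 : ℂ) + (d₃ : ℂ) * Complex.I)
      - ((x₀ 0 : ℂ) + (d₁ : ℂ) * Complex.I))
      + Complex.I * Complex.log (1 + Complex.exp ((x₀ 1 : ℂ) + (d₂ : ℂ) * Complex.I))).re) = 0 := by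
    have hD := hasDerivAt_pot2 ((x₀ 0 : ℂ) + (d₁ : ℂ) * Complex.I)
      ((x₀ 1 : ℂ) + (d₂ : ℂ) * Complex.I) ((x₀ 2 : ℂ) + (d₃ : ℂ) * Complex.I)
      (ne_of_gt (him2 (x₀ 1)))
    have := hD.deriv
    rw [hcrit.2.1] at this
    rw [← this]
    simp
  have hmax₂ := strict_max_1d hh₂ hanti₂ hcrit₂
  have hle₂ : ∀ t : ℝ, (pot ((x₀ 0 : ℂ) + (d₁ : ℂ) * Complex.I) ((t : ℂ) + (d₂ : ℂ) * Complex.I)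
      ((x₀ 2 : ℂ) + (d₃ : ℂ) * Complex.I)).re
      ≤ (pot ((x₀ 0 : ℂ) + (d₁ : ℂ) * Complex.I) ((x₀ 1 : ℂ) + (d₂ : ℂ) * Complex.I)
      ((x₀ 2 : ℂ) + (d₃ : ℂ) * Complex.I)).re := by
    intro t
    rcases eq_or_ne t (x₀ 1) with h | h
    · rw [h]
    · exact le_of_lt (hmax₂ t h)
  -- coordinate 3
  have hh₃ : ∀ t : ℝ, HasDerivAt
      (fun s : ℝ => (pot ((x₀ 0 : ℂ) + (d₁ : ℂ) * Complex.I) ((x₀ 1 : ℂ) + (d₂ : ℂ) * Complex.I)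
        ((s : ℂ) + (d₃ : ℂ) * Complex.I)).re)
      ((Complex.I * (((x₀ 1 : ℂ) + (d₂ : ℂ) * Complex.I) + ((t : ℂ) + (d₃ : ℂ) * Complex.I))
        + (π : ℂ)
        - 3 * Complex.I * Complex.log (1 + Complex.exp ((t : ℂ) + (d₃ : ℂ) * Complex.I))).re) t := by
    intro t
    exact real_slice d₃ t (hasDerivAt_pot3 _ _ _ (ne_of_lt (him3 t)))
  have hφ₃ : ∀ t : ℝ, HasDerivAt
      (fun s : ℝ => ((Complex.I * (((x₀ 1 : ℂ) + (d₂ : ℂ) * Complex.I)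
          + ((s : ℂ) + (d₃ : ℂ) * Complex.I)) + (π : ℂ)
        - 3 * Complex.I * Complex.log (1 + Complex.exp ((s : ℂ) + (d₃ : ℂ) * Complex.I))).re))
      ((Complex.I - 3 * Complex.I * (Complex.exp ((t : ℂ) + (d₃ : ℂ) * Complex.I)
        / (1 + Complex.exp ((t : ℂ) + (d₃ : ℂ) * Complex.I)))).re) t := by
    intro t
    exact real_slice d₃ t (hasDerivAt_P3 _ (ne_of_lt (him3 t)))
  have hanti₃ : StrictAnti (fun s : ℝ => ((Complex.I * (((x₀ 1 : ℂ) + (d₂ : ℂ) * Complex.I)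
      + ((s : ℂ) + (d₃ : ℂ) * Complex.I)) + (π : ℂ)
      - 3 * Complex.I * Complex.log (1 + Complex.exp ((s : ℂ) + (d₃ : ℂ) * Complex.I))).re)) := by
    apply strictAnti_of_deriv_neg
    intro t
    rw [(hφ₃ t).deriv]
    exact re_P3' (him3 t)
  have hcrit₃ : ((Complex.I * (((x₀ 1 : ℂ) + (d₂ : ℂ) * Complex.I)
      + ((x₀ 2 : ℂ) + (d₃ : ℂ) * Complex.I)) + (π : ℂ)
      - 3 * Complex.I * Complex.log (1 + Complex.exp ((x₀ 2 : ℂ) + (d₃ : ℂ) * Complex.I))).re)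
      = 0 := by
    have hD := hasDerivAt_pot3 ((x₀ 0 : ℂ) + (d₁ : ℂ) * Complex.I)
      ((x₀ 1 : ℂ) + (d₂ : ℂ) * Complex.I) ((x₀ 2 : ℂ) + (d₃ : ℂ) * Complex.I)
      (ne_of_lt (him3 (x₀ 2)))
    have := hD.deriv
    rw [hcrit.2.2] at this
    rw [← this]
    simp
  have hmax₃ := strict_max_1d hh₃ hanti₃ hcrit₃
  have hle₃ : ∀ t : ℝ, (pot ((x₀ 0 : ℂ) + (d₁ : ℂ) * Complex.I) ((x₀ 1 : ℂ) + (d₂ : ℂ) * Complex.I)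
      ((t : ℂ) + (d₃ : ℂ) * Complex.I)).re
      ≤ (pot ((x₀ 0 : ℂ) + (d₁ : ℂ) * Complex.I) ((x₀ 1 : ℂ) + (d₂ : ℂ) * Complex.I)
      ((x₀ 2 : ℂ) + (d₃ : ℂ) * Complex.I)).re := by
    intro t
    rcases eq_or_ne t (x₀ 2) with h | h
    · rw [h]
    · exact le_of_lt (hmax₃ t h)
  -- separability and conclusion
  have hsep := sep d₁ d₂ d₃ (x 0) (x 1) (x 2) (x₀ 0) (x₀ 1) (x₀ 2)
  obtain ⟨j, hj⟩ := Function.ne_iff.mp hx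
  fin_cases j
  · have h1 := hmax₁ (x 0) hj
    have h2 := hle₂ (x 1)
    have h3 := hle₃ (x 2)
    linarith
  · have h1 := hle₁ (x 0)
    have h2 := hmax₂ (x 1) hj
    have h3 := hle₃ (x 2)
    linarith
  · have h1 := hle₁ (x 0)
    have h2 := hle₂ (x 1)
    have h3 := hmax₃ (x 2) hj
    linarith
end

section
/- Let (z₁,z₂,z₃) ∈ ℍ³ satisfy the three equations (E1) Log z₃ = Log z₁″ + Log z₂′, (E2) Log z₃ = Log z₁ - Log z₂″, and (E3) Log z₁ + Log z₂′ + 3·Log z₃′ = 2πi. Then Re S(ψ(z₁,z₂,z₃)) = -(D(z₁) + D(z₂) + 3·D(z₃)), where D is the Bloch–Wigner function. (Since D(z_j) is the hyperbolic volume of the ideal tetrahedron of shape z_j, this says Re S at the critical point equals minus the hyperbolic volume of S³∖7₃.) -/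
open Real

/-- First/third component of `ψ`: `Log z - iπ`. -/
noncomputable def psiP (z : ℂ) : ℂ := Complex.log z - (π : ℂ) * Complex.I

/-- Second component of `ψ`: `-(Log z - iπ)`. -/
noncomputable def psiM (z : ℂ) : ℂ := -(Complex.log z - (π : ℂ) * Complex.I)

/-- The Bloch–Wigner function `D(z) = Im Li₂(z) + arg(1-z)·log|z|`. -/
noncomputable def BW (z : ℂ) : ℝ :=
  (Li2 z).im + (1 - z).arg * Real.log ‖z‖

section aux
open MeasureTheory Set

open MeasureTheory Set


lemma li2_meas (z : ℂ) : Measurable (fun t : ℝ => Complex.log (1 - z * (t:ℂ)) / (t:ℂ)) := by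
  apply Measurable.div
  · exact Measurable.clog (by fun_prop)
  · fun_prop

lemma li2_integrable {z : ℂ} (hs : ∀ t ∈ Set.Ioc (0:ℝ) 1, 1 - z * (t:ℂ) ∈ Complex.slitPlane) :
    IntervalIntegrable (fun t : ℝ => Complex.log (1 - z * (t:ℂ)) / (t:ℂ)) volume 0 1 := by
  set A := ‖z‖ with hA
  have hA0 : 0 ≤ A := norm_nonneg z
  set t₀ : ℝ := 1 / (2 * (A + 1)) with ht₀
  have hApos : (0:ℝ) < 2 * (A + 1) := by linarith
  have ht₀pos : 0 < t₀ := by positivity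
  have ht₀le : t₀ ≤ 1/2 := by
    rw [ht₀, div_le_div_iff₀ hApos (by norm_num)]; linarith
  have part1 : IntervalIntegrable (fun t : ℝ => Complex.log (1 - z * (t:ℂ)) / (t:ℂ)) volume 0 t₀ := by
    rw [intervalIntegrable_iff_integrableOn_Ioc_of_le ht₀pos.le]
    apply Integrable.mono' (g := fun _ => (3/2) * A)
    · exact integrableOn_const measure_Ioc_lt_top.ne
    · exact (li2_meas z).aestronglyMeasurable
    · filter_upwards [ae_restrict_mem measurableSet_Ioc] with t ht
      have ht1 : 0 < t := ht.1
      have ht2 : t ≤ t₀ := ht.2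
      have hzt : ‖z * (t:ℂ)‖ ≤ 1/2 := by
        rw [norm_mul, Complex.norm_real, Real.norm_eq_abs,
          abs_of_pos ht1]
        calc A * t ≤ A * t₀ := by
              exact mul_le_mul_of_nonneg_left ht2 hA0
          _ ≤ 1/2 := by
              rw [ht₀]
              rw [mul_one_div, div_le_div_iff₀ hApos (by norm_num)]
              linarith
      have hlog : ‖Complex.log (1 - z * (t:ℂ))‖ ≤ 3/2 * ‖z * (t:ℂ)‖ := by
        have := Complex.norm_log_one_add_half_le_self (z := -(z * (t:ℂ))) (by rwa [norm_neg])
        rw [← sub_eq_add_neg] at this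
        rwa [norm_neg] at this
      rw [norm_div, Complex.norm_real, Real.norm_eq_abs, abs_of_pos ht1]
      rw [div_le_iff₀ ht1]
      calc ‖Complex.log (1 - z * (t:ℂ))‖ ≤ 3/2 * ‖z * (t:ℂ)‖ := hlog
        _ = 3/2 * (A * t) := by
            rw [norm_mul, Complex.norm_real, Real.norm_eq_abs,
              abs_of_pos ht1]
        _ = 3/2 * A * t := by ring
  have part2 : IntervalIntegrable (fun t : ℝ => Complex.log (1 - z * (t:ℂ)) / (t:ℂ)) volume t₀ 1 := by
    apply ContinuousOn.intervalIntegrable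
    rw [Set.uIcc_of_le (by linarith)]
    apply continuousOn_of_forall_continuousAt
    intro t ht
    have htpos : 0 < t := lt_of_lt_of_le ht₀pos ht.1
    have hsl : 1 - z * (t:ℂ) ∈ Complex.slitPlane := hs t ⟨htpos, ht.2⟩
    apply ContinuousAt.div
    · exact ContinuousAt.clog (by fun_prop) hsl
    · fun_prop
    · exact_mod_cast ne_of_gt htpos
  exact part1.trans part2

lemma integral_inv_eq {z : ℂ} (hz : z ≠ 0)
    (hsl : ∀ t ∈ Set.Icc (0:ℝ) 1, 1 - z*(t:ℂ) ∈ Complex.slitPlane) :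
    (∫ t in (0:ℝ)..1, -(1 - z*(t:ℂ))⁻¹) = Complex.log (1-z)/z := by
  have key : ∀ t ∈ Set.uIcc (0:ℝ) 1,
      HasDerivAt (fun s : ℝ => Complex.log (1 - z*(s:ℂ))/z) (-(1 - z*(t:ℂ))⁻¹) t := by
    intro t ht
    rw [Set.uIcc_of_le zero_le_one] at ht
    have hslt := hsl t ht
    have e : HasDerivAt (fun w : ℂ => Complex.log (1 - z*w)/z) (-(1 - z*(t:ℂ))⁻¹) (t:ℂ) := by
      have h1 : HasDerivAt (fun w : ℂ => 1 - z*w) (-z) (t:ℂ) := by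
        simpa using ((hasDerivAt_id ((t:ℝ):ℂ)).const_mul z).const_sub 1
      have h2 := (Complex.hasDerivAt_log hslt).comp ((t:ℝ):ℂ) h1
      have h3 := h2.div_const z
      have ha : (1 - z*(t:ℂ)) ≠ 0 := Complex.slitPlane_ne_zero hslt
      refine h3.congr_deriv ?_
      field_simp
    exact e.comp_ofReal
  have hcont : IntervalIntegrable (fun t : ℝ => -(1 - z*(t:ℂ))⁻¹) volume 0 1 := by
    apply ContinuousOn.intervalIntegrable
    rw [Set.uIcc_of_le zero_le_one]
    apply continuousOn_of_forall_continuousAt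
    intro t ht
    have : (1 - z*(t:ℂ)) ≠ 0 := Complex.slitPlane_ne_zero (hsl t ht)
    fun_prop (disch := assumption)
  have := intervalIntegral.integral_eq_sub_of_hasDerivAt key hcont
  rw [this]
  push_cast
  simp [Complex.log_one]

lemma ball_bound {z : ℂ} (hz : z.im ≠ 0 ∨ z.re < 0) :
    ∃ ε δ : ℝ, 0 < ε ∧ 0 < δ ∧ ∀ x ∈ Metric.ball z ε, ∀ t ∈ Set.Ioc (0:ℝ) 1,
      δ ≤ ‖1 - x*(t:ℂ)‖ ∧ 1 - x*(t:ℂ) ∈ Complex.slitPlane := by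
  rcases hz with him | hre
  · set ε := |z.im|/2 with hε
    have hεpos : 0 < ε := by positivity
    have hzabs : 0 ≤ ‖z‖ := norm_nonneg z
    refine ⟨ε, min (1/2) (ε/(2*(‖z‖ + ε))), hεpos, by positivity, ?_⟩
    intro x hx t ht
    have hxz : ‖x - z‖ < ε := by
      rw [Metric.mem_ball, Complex.dist_eq] at hx; exact hx
    have him_x : ε ≤ |x.im| := by
      have h1 : |(x - z).im| ≤ ‖x - z‖ := Complex.abs_im_le_norm _
      rw [Complex.sub_im] at h1
      have h2 := abs_sub_abs_le_abs_sub z.im x.im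
      rw [abs_sub_comm] at h2
      have : |z.im| = 2*ε := by rw [hε]; ring
      linarith
    have hxabs : ‖x‖ < ‖z‖ + ε := by
      have := norm_sub_norm_le x z
      linarith
    have hxim_ne : x.im ≠ 0 := by
      intro h; rw [h] at him_x; simp at him_x; linarith
    have him_eq : (1 - x*(t:ℂ)).im = -(x.im * t) := by
      simp [Complex.sub_im, Complex.mul_im]
    constructor
    · rcases le_or_gt (‖x‖ * t) (1/2) with hsmall | hbig
      · have h1 : ‖x*(t:ℂ)‖ = ‖x‖ * t := by
          rw [norm_mul, Complex.norm_real, Real.norm_eq_abs, abs_of_pos ht.1]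
        have h2 := norm_sub_norm_le (1:ℂ) (x*(t:ℂ))
        simp only [norm_one] at h2
        calc min (1/2) (ε/(2*(‖z‖ + ε))) ≤ 1/2 := min_le_left _ _
          _ ≤ ‖1 - x*(t:ℂ)‖ := by rw [h1] at h2; linarith
      · have h3 : |(1 - x*(t:ℂ)).im| ≤ ‖1 - x*(t:ℂ)‖ := Complex.abs_im_le_norm _
        rw [him_eq, abs_neg, abs_mul, abs_of_pos ht.1] at h3
        calc min (1/2) (ε/(2*(‖z‖ + ε))) ≤ ε/(2*(‖z‖ + ε)) :=
              min_le_right _ _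
          _ ≤ |x.im| * t := by
              rw [div_le_iff₀ (by positivity)]
              have c2 : 1 ≤ 2*(‖x‖ * t) := by linarith
              have c3 : |x.im| * 1 ≤ |x.im| * (2*(‖x‖*t)) :=
                mul_le_mul_of_nonneg_left c2 (abs_nonneg _)
              have c4 : |x.im| * (2*(‖x‖*t)) ≤ |x.im| * t * (2*(‖z‖ + ε)) := by
                nlinarith [mul_nonneg (mul_nonneg (abs_nonneg x.im) ht.1.le)
                  (sub_nonneg.mpr hxabs.le)]
              linarith
          _ ≤ ‖1 - x*(t:ℂ)‖ := h3
    · rw [Complex.mem_slitPlane_iff]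
      right
      rw [him_eq]
      simp only [neg_ne_zero]
      exact mul_ne_zero hxim_ne (ne_of_gt ht.1)
  · set ε := -z.re/2 with hε
    have hεpos : 0 < ε := by rw [hε]; linarith
    refine ⟨ε, 1, hεpos, one_pos, ?_⟩
    intro x hx t ht
    have hxz : ‖x - z‖ < ε := by
      rw [Metric.mem_ball, Complex.dist_eq] at hx; exact hx
    have hxre : x.re < 0 := by
      have h1 : |(x - z).re| ≤ ‖x - z‖ := Complex.abs_re_le_norm _
      rw [Complex.sub_re] at h1
      have := abs_le.mp (le_of_lt (lt_of_le_of_lt h1 hxz))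
      have h2 := this.2
      rw [hε] at h2
      linarith
    have hre_eq : (1 - x*(t:ℂ)).re = 1 - x.re * t := by
      simp [Complex.sub_re, Complex.mul_re]
    have hre1 : (1:ℝ) ≤ (1 - x*(t:ℂ)).re := by
      rw [hre_eq]
      nlinarith [ht.1.le, ht.2, hxre]
    constructor
    · exact le_trans hre1 (Complex.re_le_norm _)
    · rw [Complex.mem_slitPlane_iff]; left; linarith

lemma li2_hasDerivAt {z : ℂ} (hz : z.im ≠ 0 ∨ z.re < 0) :
    HasDerivAt Li2 (-Complex.log (1 - z)/z) z := by
  have hz0 : z ≠ 0 := by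
    intro h
    rw [h] at hz
    simp at hz
  obtain ⟨ε, δ, hε, hδ, H⟩ := ball_bound hz
  have hIoc : ∀ t ∈ Set.Ioc (0:ℝ) 1, 1 - z*(t:ℂ) ∈ Complex.slitPlane :=
    fun t ht => (H z (Metric.mem_ball_self hε) t ht).2
  have hIcc : ∀ t ∈ Set.Icc (0:ℝ) 1, 1 - z*(t:ℂ) ∈ Complex.slitPlane := by
    intro t ht
    rcases eq_or_lt_of_le ht.1 with h0 | h0
    · simp [← h0, Complex.one_mem_slitPlane]
    · exact hIoc t ⟨h0, ht.2⟩
  have step := intervalIntegral.hasDerivAt_integral_of_dominated_loc_of_deriv_le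
    (F := fun x (t:ℝ) => Complex.log (1 - x*(t:ℂ))/(t:ℂ))
    (F' := fun x (t:ℝ) => -(1 - x*(t:ℂ))⁻¹)
    (μ := volume) (a := (0:ℝ)) (b := 1) (x₀ := z) (bound := fun _ => δ⁻¹) (Metric.ball_mem_nhds z hε)
    (Filter.Eventually.of_forall fun x => (li2_meas x).aestronglyMeasurable)
    (li2_integrable hIoc)
    ?_ ?_ ?_ ?_
  · have h2 : HasDerivAt (fun x => -∫ t in (0:ℝ)..1, Complex.log (1 - x*(t:ℂ))/(t:ℂ))
        (-∫ t in (0:ℝ)..1, -(1 - z*(t:ℂ))⁻¹) z := step.2.neg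
    have hLi : Li2 = fun x => -∫ t in (0:ℝ)..1, Complex.log (1 - x*(t:ℂ))/(t:ℂ) := rfl
    rw [hLi]
    convert h2 using 1
    rw [integral_inv_eq hz0 hIcc, neg_div]
  · apply Measurable.aestronglyMeasurable
    apply Measurable.neg
    apply Measurable.inv
    fun_prop
  · apply Filter.Eventually.of_forall
    intro t ht x hx
    rw [Set.uIoc_of_le zero_le_one] at ht
    have hb := (H x hx t ht).1
    rw [norm_neg, norm_inv]
    exact inv_anti₀ hδ hb
  · exact intervalIntegrable_const
  · apply Filter.Eventually.of_forall
    intro t ht x hx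
    rw [Set.uIoc_of_le zero_le_one] at ht
    have hslt := (H x hx t ht).2
    have htne : ((t:ℝ):ℂ) ≠ 0 := by exact_mod_cast ne_of_gt ht.1
    have h1 : HasDerivAt (fun x : ℂ => 1 - x*(t:ℂ)) (-(t:ℂ)) x := by
      simpa using ((hasDerivAt_id x).mul_const ((t:ℝ):ℂ)).const_sub 1
    have h2 := (Complex.hasDerivAt_log hslt).comp x h1
    have h3 := h2.div_const ((t:ℝ):ℂ)
    have ha : (1 - x*(t:ℂ)) ≠ 0 := Complex.slitPlane_ne_zero hslt
    refine h3.congr_deriv ?_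
    field_simp

lemma log_branch {w : ℂ} (hw : w.im ≠ 0 ∨ w.re < 0) :
    Complex.log (1 - w⁻¹) = Complex.log (1 - w) - Complex.log (-w) := by
  have hw0 : w ≠ 0 := by intro h; rw [h] at hw; simp at hw
  have hnw : -w ∈ Complex.slitPlane := by
    rw [Complex.mem_slitPlane_iff]
    rcases hw with h | h
    · right; simpa using h
    · left; simp only [Complex.neg_re]; linarith
  have hargnw : (-w).arg ≠ π := (Complex.mem_slitPlane_iff_arg.mp hnw).1
  have h1w : (1:ℂ) - w ≠ 0 := by
    intro h
    have hw1 : w = 1 := by linear_combination -h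
    rw [hw1] at hw
    simp at hw
    linarith
  have hvne : (-w)⁻¹ ≠ 0 := inv_ne_zero (neg_ne_zero.mpr hw0)
  have heq : 1 - w⁻¹ = (1 - w) * (-w)⁻¹ := by
    rw [inv_neg, mul_neg]
    field_simp
    ring
  have hnsq : 0 < Complex.normSq w := Complex.normSq_pos.mpr hw0
  have hcond : (1-w).arg + ((-w)⁻¹).arg ∈ Set.Ioc (-π) π := by
    have hu_lb := Complex.neg_pi_lt_arg (1 - w)
    have hu_ub := Complex.arg_le_pi (1 - w)
    have hv_lb := Complex.neg_pi_lt_arg ((-w)⁻¹)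
    have hv_ub := Complex.arg_le_pi ((-w)⁻¹)
    have hWim : ((-w)⁻¹).im = w.im / Complex.normSq w := by
      rw [Complex.inv_im]
      simp [Complex.normSq_neg]
    have hWre : ((-w)⁻¹).re = -w.re / Complex.normSq w := by
      rw [Complex.inv_re]
      simp [Complex.normSq_neg]
    have hUim : ((1:ℂ) - w).im = -w.im := by simp
    rcases lt_trichotomy w.im 0 with him | him | him
    · have hq1 : 0 ≤ ((1:ℂ)-w).arg := Complex.arg_nonneg_iff.mpr (by rw [hUim]; linarith)
      have hq2 : ((-w)⁻¹).arg < 0 := Complex.arg_neg_iff.mpr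
        (by rw [hWim]; exact div_neg_of_neg_of_pos him hnsq)
      constructor <;> linarith
    · have hre : w.re < 0 := hw.resolve_left (by simp [him])
      have hq1 : ((1:ℂ)-w).arg = 0 := Complex.arg_eq_zero_iff.mpr
        ⟨by simp only [Complex.sub_re, Complex.one_re]; linarith, by rw [hUim, him]; ring⟩
      have hq2 : ((-w)⁻¹).arg = 0 := Complex.arg_eq_zero_iff.mpr
        ⟨by rw [hWre]; exact le_of_lt (div_pos (by linarith) hnsq), by rw [hWim, him]; simp⟩
      rw [hq1, hq2]
      constructor
      · linarith [Real.pi_pos]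
      · linarith [Real.pi_pos]
    · have hq1 : ((1:ℂ)-w).arg < 0 := Complex.arg_neg_iff.mpr (by rw [hUim]; linarith)
      have hq2 : 0 ≤ ((-w)⁻¹).arg := Complex.arg_nonneg_iff.mpr
        (by rw [hWim]; positivity)
      constructor <;> linarith
  rw [heq, Complex.log_mul h1w hvne hcond, Complex.log_inv _ hargnw]
  ring

noncomputable def gfun (w : ℂ) : ℂ := Li2 w + Li2 w⁻¹ + Complex.log (-w)^2/2

lemma gfun_hasDerivAt {w : ℂ} (hw : w.im ≠ 0 ∨ w.re < 0) : HasDerivAt gfun 0 w := by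
  have hw0 : w ≠ 0 := by intro h; rw [h] at hw; simp at hw
  have hnsq : 0 < Complex.normSq w := Complex.normSq_pos.mpr hw0
  have hnw : -w ∈ Complex.slitPlane := by
    rw [Complex.mem_slitPlane_iff]
    rcases hw with h | h
    · right; simpa using h
    · left; simp only [Complex.neg_re]; linarith
  have hinv_cond : (w⁻¹).im ≠ 0 ∨ (w⁻¹).re < 0 := by
    rcases hw with h | h
    · left
      rw [Complex.inv_im]
      simp only [ne_eq, div_eq_zero_iff, neg_eq_zero]
      push_neg
      exact ⟨h, ne_of_gt hnsq⟩
    · right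
      rw [Complex.inv_re]
      exact div_neg_of_neg_of_pos h hnsq
  have h1 := li2_hasDerivAt hw
  have h2 := (li2_hasDerivAt hinv_cond).comp w (hasDerivAt_inv hw0)
  have hneg : HasDerivAt (fun x : ℂ => -x) (-1) w := (hasDerivAt_id w).neg
  have hlog : HasDerivAt (fun x : ℂ => Complex.log (-x)) ((-w)⁻¹ * (-1)) w :=
    (Complex.hasDerivAt_log hnw).comp w hneg
  have hsq := (hlog.pow 2).div_const 2
  have total := (h1.add h2).add hsq
  have h1w : (1:ℂ) - w ≠ 0 := by
    intro h
    have hw1 : w = 1 := by linear_combination -h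
    rw [hw1] at hw
    simp at hw
    linarith
  have hnwne : -w ≠ 0 := neg_ne_zero.mpr hw0
  have hg : gfun = fun x => Li2 x + Li2 x⁻¹ + Complex.log (-x)^2/2 := rfl
  rw [hg]
  refine total.congr_deriv ?_
  rw [log_branch hw]
  field_simp
  ring

lemma gfun_const_on {s : Set ℂ} (hconv : Convex ℝ s) (hopen : IsOpen s)
    (hsub : ∀ w ∈ s, w.im ≠ 0 ∨ w.re < 0) {x y : ℂ} (hx : x ∈ s) (hy : y ∈ s) :
    gfun x = gfun y := by
  apply hconv.is_const_of_fderivWithin_eq_zero (𝕜 := ℂ)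
    (fun w hw => ((gfun_hasDerivAt (hsub w hw)).differentiableAt).differentiableWithinAt)
    ?_ hx hy
  intro w hw
  rw [fderivWithin_of_isOpen hopen hw, ((gfun_hasDerivAt (hsub w hw)).hasFDerivAt).fderiv]
  ext
  simp

lemma li2_neg_one_im : (Li2 (-1:ℂ)).im = 0 := by
  have hs : ∀ t ∈ Set.Ioc (0:ℝ) 1, 1 - (-1:ℂ) * (t:ℂ) ∈ Complex.slitPlane := by
    intro t ht
    rw [Complex.mem_slitPlane_iff]
    left
    simp only [neg_mul, one_mul, sub_neg_eq_add, Complex.add_re, Complex.one_re,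
      Complex.ofReal_re]
    linarith [ht.1]
  have hint := li2_integrable hs
  have h1 : Li2 (-1:ℂ) = -∫ t in (0:ℝ)..1, Complex.log (1 - (-1:ℂ) * (t:ℂ)) / (t:ℂ) := rfl
  rw [h1, Complex.neg_im, neg_eq_zero]
  rw [intervalIntegral.integral_of_le zero_le_one]
  rw [intervalIntegrable_iff_integrableOn_Ioc_of_le zero_le_one] at hint
  have hcomm := Complex.imCLM.integral_comp_comm hint
  simp only [Complex.imCLM_apply] at hcomm
  rw [← hcomm]
  rw [MeasureTheory.setIntegral_congr_fun measurableSet_Ioc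
    (g := fun _ => (0:ℝ)) ?_, integral_zero]
  intro t ht
  have he : (1 : ℂ) - (-1)*(t:ℂ) = ((1+t:ℝ):ℂ) := by push_cast; ring
  simp only [he]
  rw [← Complex.ofReal_log (by linarith [ht.1] : (0:ℝ) ≤ 1+t), ← Complex.ofReal_div,
    Complex.ofReal_im]

lemma li2_inv_im {z : ℂ} (hz : 0 < z.im) :
    (Li2 z⁻¹).im = -(Li2 z).im - (Complex.log (-z)^2).im/2 := by
  have s1 : gfun z = gfun (-1 + Complex.I) := by
    apply gfun_const_on (s := {w : ℂ | 0 < w.im})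
      (convex_halfSpace_im_gt 0) (isOpen_lt continuous_const Complex.continuous_im)
      (fun w hw => Or.inl (ne_of_gt hw))
    · exact hz
    · simp [Complex.add_im]
  have s2 : gfun (-1 + Complex.I) = gfun (-1) := by
    apply gfun_const_on (s := {w : ℂ | w.re < 0})
      (convex_halfSpace_re_lt 0) (isOpen_lt Complex.continuous_re continuous_const)
      (fun w hw => Or.inr hw)
    · simp [Complex.add_re]
    · simp
  have hval : gfun (-1 : ℂ) = 2 * Li2 (-1) := by
    have hg : gfun (-1:ℂ) = Li2 (-1) + Li2 (-1:ℂ)⁻¹ + Complex.log (-(-1:ℂ))^2/2 := rfl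
    rw [hg]
    norm_num
    ring
  have h := s1.trans (s2.trans hval)
  have him := congrArg Complex.im h
  have hee : (gfun z).im = (Li2 z).im + (Li2 z⁻¹).im + (Complex.log (-z)^2).im/2 := by
    simp [gfun, Complex.add_im, Complex.div_im]
  rw [hee] at him
  have h2 : (2 * Li2 (-1:ℂ)).im = 0 := by
    rw [Complex.mul_im]
    simp [li2_neg_one_im]
  rw [h2] at him
  linarith

lemma log_div_aux {u v : ℂ} (hu : 0 < u.im) (hv : 0 < v.im) :
    Complex.log (u / v) = Complex.log u - Complex.log v := by
  have hu0 : u ≠ 0 := by intro h; rw [h] at hu; simp at hu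
  have hv0 : v ≠ 0 := by intro h; rw [h] at hv; simp at hv
  have hvpi : v.arg ≠ π := by
    intro h
    rw [Complex.arg_eq_pi_iff] at h
    linarith [h.2]
  have hau1 : 0 < u.arg := by
    have h0 := Complex.arg_nonneg_iff.mpr hu.le
    rcases eq_or_lt_of_le h0 with h | h
    · exfalso
      have := Complex.arg_eq_zero_iff.mp h.symm
      linarith [this.2]
    · exact h
  have hav1 : 0 < v.arg := by
    have h0 := Complex.arg_nonneg_iff.mpr hv.le
    rcases eq_or_lt_of_le h0 with h | h
    · exfalso
      have := Complex.arg_eq_zero_iff.mp h.symm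
      linarith [this.2]
    · exact h
  have hau2 : u.arg ≤ π := Complex.arg_le_pi u
  have hav2 : v.arg ≤ π := Complex.arg_le_pi v
  have hargvinv : (v⁻¹).arg = -v.arg := by rw [Complex.arg_inv, if_neg hvpi]
  rw [div_eq_mul_inv, Complex.log_mul hu0 (inv_ne_zero hv0) ?_, Complex.log_inv v hvpi]
  · ring
  · rw [hargvinv]
    constructor
    · linarith
    · linarith

end aux

/-- at a solution of (E1), (E2), (E3) in `ℍ³`, the real part of
`S` at `ψ(z₁,z₂,z₃)` equals `-(D(z₁) + D(z₂) + 3 D(z₃))`, i.e. minus the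
hyperbolic volume of `S³∖7₃`. -/
theorem reS_eq_neg_volume (z₁ z₂ z₃ : ℂ)
    (h₁ : 0 < z₁.im) (h₂ : 0 < z₂.im) (h₃ : 0 < z₃.im)
    (hE1 : Complex.log z₃ =
      Complex.log ((z₁ - 1) / z₁) + Complex.log (1 / (1 - z₂)))
    (hE2 : Complex.log z₃ = Complex.log z₁ - Complex.log ((z₂ - 1) / z₂))
    (hE3 : Complex.log z₁ + Complex.log (1 / (1 - z₂)) +
      3 * Complex.log (1 / (1 - z₃)) = 2 * (π : ℂ) * Complex.I) :
    (pot (psiP z₁) (psiM z₂) (psiP z₃)).re = -(BW z₁ + BW z₂ + 3 * BW z₃) := by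
  -- nonvanishing
  have hz₁0 : z₁ ≠ 0 := by intro h; rw [h] at h₁; simp at h₁
  have hz₂0 : z₂ ≠ 0 := by intro h; rw [h] at h₂; simp at h₂
  have hz₃0 : z₃ ≠ 0 := by intro h; rw [h] at h₃; simp at h₃
  have him12 : ((1:ℂ) - z₂).im < 0 := by simp [Complex.sub_im]; exact h₂
  have him13 : ((1:ℂ) - z₃).im < 0 := by simp [Complex.sub_im]; exact h₃
  have him11 : ((1:ℂ) - z₁).im < 0 := by simp [Complex.sub_im]; exact h₁
  have harg12 : ((1:ℂ) - z₂).arg ≠ π := by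
    intro h; rw [Complex.arg_eq_pi_iff] at h; linarith [h.2]
  have harg13 : ((1:ℂ) - z₃).arg ≠ π := by
    intro h; rw [Complex.arg_eq_pi_iff] at h; linarith [h.2]
  -- exp computations
  have heP1 : -Complex.exp (psiP z₁) = z₁ := by
    rw [psiP, Complex.exp_sub, Complex.exp_pi_mul_I, Complex.exp_log hz₁0]
    field_simp
  have heP3 : -Complex.exp (psiP z₃) = z₃ := by
    rw [psiP, Complex.exp_sub, Complex.exp_pi_mul_I, Complex.exp_log hz₃0]
    field_simp
  have heM2 : -Complex.exp (psiM z₂) = z₂⁻¹ := by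
    rw [psiM, Complex.exp_neg, Complex.exp_sub, Complex.exp_pi_mul_I, Complex.exp_log hz₂0]
    field_simp
  -- log-div rewrites
  have hlog_div₁ : Complex.log ((z₁ - 1)/z₁) = Complex.log (z₁ - 1) - Complex.log z₁ :=
    log_div_aux (by simp [Complex.sub_im]; exact h₁) h₁
  have hlog_div₂ : Complex.log ((z₂ - 1)/z₂) = Complex.log (z₂ - 1) - Complex.log z₂ :=
    log_div_aux (by simp [Complex.sub_im]; exact h₂) h₂
  have hlog_inv₂ : Complex.log (1/(1 - z₂)) = -Complex.log (1 - z₂) := by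
    rw [one_div, Complex.log_inv _ harg12]
  have hlog_inv₃ : Complex.log (1/(1 - z₃)) = -Complex.log (1 - z₃) := by
    rw [one_div, Complex.log_inv _ harg13]
  -- complex constraints
  have cE1 : Complex.log z₃ =
      Complex.log (z₁ - 1) - Complex.log z₁ - Complex.log (1 - z₂) := by
    linear_combination hE1 + hlog_div₁ + hlog_inv₂
  have cE2 : Complex.log z₃ =
      Complex.log z₁ - Complex.log (z₂ - 1) + Complex.log z₂ := by
    linear_combination hE2 - hlog_div₂
  have cE3 : Complex.log z₁ - Complex.log (1 - z₂) - 3*Complex.log (1 - z₃)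
      = 2*(π:ℂ)*Complex.I := by
    linear_combination hE3 - hlog_inv₂ - 3*hlog_inv₃
  -- neg-arg facts
  have hargm₁ : (z₁ - 1).arg = (1 - z₁).arg + π := by
    rw [show z₁ - 1 = -(1 - z₁) by ring, Complex.arg_neg_eq_arg_add_pi_of_im_neg him11]
  have hargm₂ : (z₂ - 1).arg = (1 - z₂).arg + π := by
    rw [show z₂ - 1 = -(1 - z₂) by ring, Complex.arg_neg_eq_arg_add_pi_of_im_neg him12]
  have habs₂ : ‖z₂ - 1‖ = ‖1 - z₂‖ := by
    rw [show z₂ - 1 = -(1 - z₂) by ring, norm_neg]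
  -- real constraints
  have e1 : z₃.arg = (1 - z₁).arg + π - z₁.arg - (1 - z₂).arg := by
    have h := congrArg Complex.im cE1
    simp only [Complex.sub_im, Complex.log_im] at h
    rw [hargm₁] at h
    linarith
  have e2im : z₃.arg = z₁.arg - ((1 - z₂).arg + π) + z₂.arg := by
    have h := congrArg Complex.im cE2
    simp only [Complex.sub_im, Complex.add_im, Complex.log_im] at h
    rw [hargm₂] at h
    linarith
  have e2re : Real.log (‖z₃‖) =
      Real.log (‖z₁‖) - Real.log (‖1 - z₂‖)
      + Real.log (‖z₂‖) := by
    have h := congrArg Complex.re cE2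
    simp only [Complex.sub_re, Complex.add_re, Complex.log_re] at h
    rw [habs₂] at h
    exact h
  have e3im : z₁.arg - (1 - z₂).arg - 3*(1 - z₃).arg = 2*π := by
    have h := congrArg Complex.im cE3
    simp only [Complex.sub_im, Complex.mul_im, Complex.log_im, Complex.I_im, Complex.I_re,
      Complex.ofReal_im, Complex.ofReal_re, Complex.re_ofNat, Complex.im_ofNat,
      Complex.mul_re] at h
    ring_nf at h
    linarith
  -- inversion
  have hinv : (Li2 z₂⁻¹).im = -(Li2 z₂).im - (Complex.log (-z₂)^2).im/2 := li2_inv_im h₂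
  have hsqim : (Complex.log (-z₂)^2).im
      = 2 * Real.log (‖z₂‖) * (z₂.arg - π) := by
    rw [pow_two, Complex.mul_im, Complex.log_re, Complex.log_im]
    have habsn : ‖-z₂‖ = ‖z₂‖ := by
      rw [norm_neg]
    rw [habsn, Complex.arg_neg_eq_arg_sub_pi_of_im_pos h₂]
    ring
  -- component decompositions
  have hP1 : psiP z₁ = ((Real.log (‖z₁‖) : ℝ) : ℂ)
      + ((z₁.arg - π : ℝ) : ℂ) * Complex.I := by
    apply Complex.ext <;>
      simp [psiP, Complex.log_re, Complex.log_im]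
  have hP3 : psiP z₃ = ((Real.log (‖z₃‖) : ℝ) : ℂ)
      + ((z₃.arg - π : ℝ) : ℂ) * Complex.I := by
    apply Complex.ext <;>
      simp [psiP, Complex.log_re, Complex.log_im]
  have hM2 : psiM z₂ = ((-Real.log (‖z₂‖) : ℝ) : ℂ)
      + ((π - z₂.arg : ℝ) : ℂ) * Complex.I := by
    apply Complex.ext <;>
      simp [psiM, Complex.log_re, Complex.log_im]
  have hpot : pot (psiP z₁) (psiM z₂) (psiP z₃) =
      Complex.I * ((psiP z₁)*(psiP z₁)) - Complex.I * ((psiP z₁)*(psiM z₂))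
      + Complex.I * ((psiM z₂)*(psiP z₃)) + ((1/2:ℝ):ℂ) * (Complex.I * ((psiP z₃)*(psiP z₃)))
      + (((-π:ℝ):ℂ) * (psiP z₁) + ((π:ℝ):ℂ) * (psiP z₃))
      + Complex.I * Li2 z₁ - Complex.I * Li2 (z₂⁻¹) + ((3:ℝ):ℂ) * (Complex.I * Li2 z₃) := by
    rw [pot, heP1, heM2, heP3]
    push_cast
    ring
  rw [hpot, hP1, hM2, hP3, BW, BW, BW]
  simp only [Complex.add_re, Complex.add_im, Complex.sub_re, Complex.sub_im, Complex.neg_re,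
    Complex.neg_im, Complex.mul_re, Complex.mul_im, Complex.I_re, Complex.I_im,
    Complex.ofReal_re, Complex.ofReal_im]
  rw [hinv, hsqim]
  rw [show (1 - z₁).arg = z₃.arg - π + z₁.arg + (1 - z₂).arg by linarith [e1]]
  rw [show (1 - z₃).arg = (z₁.arg - (1 - z₂).arg - 2*π)/3 by linarith [e3im]]
  rw [e2im, e2re]
  ring
end
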